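/- For every 0 ≤ λ ≤ I(X;Y), every minimiser of the Symmetric Information Bottleneck problem — minimise I_q(X;T_X) + I_q(Y;T_Y) over pairs of channels q(T_X|X), q(T_Y|Y) subject to I_q(T_X;T_Y) ≥ λ, with joint distribution q(x,y,t_X,t_Y) = p(x,y) q(t_X|x) q(t_Y|y) — satisfies I_q(T_X;T_Y) = λ; hence the inequality constraint can be replaced by the equality constraint I_q(T_X;T_Y) = λ without changing the set of minimisers. -/

import Mathlib

noncomputable section

/-- `p` is a probability distribution on the finite set `X × Y`. -/
def IsJointDist {X Y : Type} [Fintype X] [Fintype Y] (p : X → Y → ℝ) : Prop :=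
  (∀ x y, 0 ≤ p x y) ∧ (∑ x, ∑ y, p x y) = 1

/-- Marginal distribution `p(X)`. -/
def margX {X Y : Type} [Fintype Y] (p : X → Y → ℝ) (x : X) : ℝ := ∑ y, p x y

/-- Marginal distribution `p(Y)`. -/
def margY {X Y : Type} [Fintype X] (p : X → Y → ℝ) (y : Y) : ℝ := ∑ x, p x y

/-- Mutual information `I(X;Y)`. -/
def miXY {X Y : Type} [Fintype X] [Fintype Y] (p : X → Y → ℝ) : ℝ :=
  ∑ x, ∑ y, p x y * Real.log (p x y / (margX p x * margY p y))

/-- A channel from `A` to the countable space `ℕ`. -/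
def IsChannelNat {A : Type} (κ : A → ℕ → ℝ) : Prop :=
  (∀ a t, 0 ≤ κ a t) ∧ ∀ a, (∑' t, κ a t) = 1

/-- The joint distribution `p(X,Y)` as a weight on `X × Y`. -/
def jointW {X Y : Type} (p : X → Y → ℝ) : X × Y → ℝ := fun a => p a.1 a.2

/-- The product of the marginals `p(X)p(Y)` as a weight on `X × Y`. -/
def splitW {X Y : Type} [Fintype X] [Fintype Y] (p : X → Y → ℝ) : X × Y → ℝ :=
  fun a => margX p a.1 * margY p a.2

/-- The split channel `κ_X ⊗ κ_Y` from `X × Y` to `T_X × T_Y`. -/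
def tens2 {X Y : Type} (κX : X → ℕ → ℝ) (κY : Y → ℕ → ℝ) : X × Y → ℕ × ℕ → ℝ :=
  fun a s => κX a.1 s.1 * κY a.2 s.2

/-- Pushforward of a weight `w` on `X × Y` through a channel to `T_X × T_Y`. -/
def push2 {X Y : Type} [Fintype X] [Fintype Y] (w : X × Y → ℝ)
    (κ : X × Y → ℕ × ℕ → ℝ) (s : ℕ × ℕ) : ℝ :=
  ∑ a : X × Y, w a * κ a s

/-- Kullback–Leibler divergence between distributions on `T_X × T_Y`. -/
def klNN (u v : ℕ × ℕ → ℝ) : ℝ := ∑' s : ℕ × ℕ, u s * Real.log (u s / v s)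

/-- Mutual information `I_κ(X,Y;T)` between the input (distributed as `w`) and the
output of a channel `κ` from `X × Y` to `T_X × T_Y`. -/
def mi2 {X Y : Type} [Fintype X] [Fintype Y] (w : X × Y → ℝ)
    (κ : X × Y → ℕ × ℕ → ℝ) : ℝ :=
  ∑ a : X × Y, ∑' s : ℕ × ℕ, w a * κ a s * Real.log (κ a s / push2 w κ s)

/-- Marginal `q(T_X)` of the joint `q(x,y,t_X,t_Y) = p(x,y) q(t_X|x) q(t_Y|y)`. -/
def margTX {X Y : Type} [Fintype X] [Fintype Y] (p : X → Y → ℝ)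
    (qX : X → ℕ → ℝ) (t : ℕ) : ℝ :=
  ∑ x, margX p x * qX x t

/-- Marginal `q(T_Y)` of the joint `q(x,y,t_X,t_Y) = p(x,y) q(t_X|x) q(t_Y|y)`. -/
def margTY {X Y : Type} [Fintype X] [Fintype Y] (p : X → Y → ℝ)
    (qY : Y → ℕ → ℝ) (t : ℕ) : ℝ :=
  ∑ y, margY p y * qY y t

/-- Marginal `q(T_X,T_Y)` of the joint `q(x,y,t_X,t_Y) = p(x,y) q(t_X|x) q(t_Y|y)`. -/
def margTT {X Y : Type} [Fintype X] [Fintype Y] (p : X → Y → ℝ)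
    (qX : X → ℕ → ℝ) (qY : Y → ℕ → ℝ) (s : ℕ × ℕ) : ℝ :=
  ∑ x, ∑ y, p x y * qX x s.1 * qY y s.2

/-- Mutual information `I_q(X;T_X)`. -/
def miXTX {X Y : Type} [Fintype X] [Fintype Y] (p : X → Y → ℝ)
    (qX : X → ℕ → ℝ) : ℝ :=
  ∑ x, ∑' t, margX p x * qX x t * Real.log (qX x t / margTX p qX t)

/-- Mutual information `I_q(Y;T_Y)`. -/
def miYTY {X Y : Type} [Fintype X] [Fintype Y] (p : X → Y → ℝ)
    (qY : Y → ℕ → ℝ) : ℝ :=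
  ∑ y, ∑' t, margY p y * qY y t * Real.log (qY y t / margTY p qY t)

/-- Mutual information `I_q(T_X;T_Y)`. -/
def miTT {X Y : Type} [Fintype X] [Fintype Y] (p : X → Y → ℝ)
    (qX : X → ℕ → ℝ) (qY : Y → ℕ → ℝ) : ℝ :=
  ∑' s : ℕ × ℕ, margTT p qX qY s *
    Real.log (margTT p qX qY s / (margTX p qX s.1 * margTY p qY s.2))


namespace SIBaux

/-- Summability of a finite sum of summable functions. -/
lemma summable_finsum {ι β : Type*} (s : Finset ι) (g : ι → β → ℝ)
    (h : ∀ i ∈ s, Summable (g i)) : Summable fun t => ∑ i ∈ s, g i t := by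
  classical
  induction s using Finset.induction_on with
  | empty => simpa using summable_zero
  | insert _ _ hx ih =>
    rename_i a s'
    simp only [Finset.sum_insert hx]
    exact (h a (Finset.mem_insert_self a s')).add
      (ih fun i hi => h i (Finset.mem_insert_of_mem hi))

/-- `u - v ≤ u * log (u / v)` under mild positivity side conditions. -/
lemma sub_le_mul_log_div {u v : ℝ} (hu : 0 ≤ u) (hv : 0 ≤ v) (h : v = 0 → u = 0) :
    u - v ≤ u * Real.log (u / v) := by
  rcases eq_or_lt_of_le hu with h0 | hu0
  · simp [← h0, hv]
  · have hv0 : 0 < v := by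
      rcases eq_or_lt_of_le hv with h1 | h1
      · exact absurd (h h1.symm) (by linarith)
      · exact h1
    have h1 : Real.log (v / u) ≤ v / u - 1 := Real.log_le_sub_one_of_pos (div_pos hv0 hu0)
    have h2 : Real.log (u / v) = -Real.log (v / u) := by
      rw [← Real.log_inv]; congr 1
      rw [inv_div]
    have h3 : u * Real.log (v / u) ≤ u * (v / u - 1) :=
      mul_le_mul_of_nonneg_left h1 hu
    have h4 : u * (v / u - 1) = v - u := by field_simp
    rw [h2]; nlinarith [h3, h4]

/-- `u * log (u / v) ≤ u * log C` when `u ≤ C * v`. -/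
lemma mul_log_div_le {u v C : ℝ} (hu : 0 ≤ u) (hv : 0 ≤ v) (h : u ≤ C * v) :
    u * Real.log (u / v) ≤ u * Real.log C := by
  rcases eq_or_lt_of_le hu with h0 | h0
  · simp [← h0]
  · have hv0 : 0 < v := by
      rcases eq_or_lt_of_le hv with h1 | h1
      · exfalso; rw [← h1, mul_zero] at h; linarith
      · exact h1
    have hle : u / v ≤ C := (div_le_iff₀ hv0).2 (by linarith [h])
    exact mul_le_mul_of_nonneg_left (Real.log_le_log (div_pos h0 hv0) hle) hu

lemma summable_row {A : Type} {q : A → ℕ → ℝ} (hq : IsChannelNat q) (a : A) :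
    Summable (q a) := by
  by_contra h
  have h2 := hq.2 a
  rw [tsum_eq_zero_of_not_summable h] at h2
  norm_num at h2

variable {X Y : Type} [Fintype X] [Fintype Y] {p : X → Y → ℝ}

lemma margX_nonneg (hp : IsJointDist p) (x : X) : 0 ≤ margX p x :=
  Finset.sum_nonneg fun y _ => hp.1 x y

lemma margY_nonneg (hp : IsJointDist p) (y : Y) : 0 ≤ margY p y :=
  Finset.sum_nonneg fun x _ => hp.1 x y

lemma p_le_margX (hp : IsJointDist p) (x : X) (y : Y) : p x y ≤ margX p x :=
  Finset.single_le_sum (fun y' _ => hp.1 x y') (Finset.mem_univ y)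

lemma p_le_margY (hp : IsJointDist p) (x : X) (y : Y) : p x y ≤ margY p y :=
  Finset.single_le_sum (fun x' _ => hp.1 x' y) (Finset.mem_univ x)

lemma sum_margX (hp : IsJointDist p) : ∑ x, margX p x = 1 := hp.2

lemma sum_margY (hp : IsJointDist p) : ∑ y, margY p y = 1 := by
  have h := hp.2
  rw [Finset.sum_comm] at h
  exact h

lemma margX_le_one (hp : IsJointDist p) (x : X) : margX p x ≤ 1 := by
  rw [← sum_margX hp]
  exact Finset.single_le_sum (fun x' _ => margX_nonneg hp x') (Finset.mem_univ x)

lemma margY_le_one (hp : IsJointDist p) (y : Y) : margY p y ≤ 1 := by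
  rw [← sum_margY hp]
  exact Finset.single_le_sum (fun y' _ => margY_nonneg hp y') (Finset.mem_univ y)

lemma margTX_nonneg (hp : IsJointDist p) {qX : X → ℕ → ℝ} (hqX : IsChannelNat qX)
    (t : ℕ) : 0 ≤ margTX p qX t :=
  Finset.sum_nonneg fun x _ => mul_nonneg (margX_nonneg hp x) (hqX.1 x t)

lemma margTY_nonneg (hp : IsJointDist p) {qY : Y → ℕ → ℝ} (hqY : IsChannelNat qY)
    (t : ℕ) : 0 ≤ margTY p qY t :=
  Finset.sum_nonneg fun y _ => mul_nonneg (margY_nonneg hp y) (hqY.1 y t)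

lemma margTT_nonneg (hp : IsJointDist p) {qX : X → ℕ → ℝ} {qY : Y → ℕ → ℝ}
    (hqX : IsChannelNat qX) (hqY : IsChannelNat qY) (u : ℕ × ℕ) :
    0 ≤ margTT p qX qY u :=
  Finset.sum_nonneg fun x _ => Finset.sum_nonneg fun y _ =>
    mul_nonneg (mul_nonneg (hp.1 x y) (hqX.1 x u.1)) (hqY.1 y u.2)

lemma summable_margTX {qX : X → ℕ → ℝ} (hqX : IsChannelNat qX) :
    Summable (margTX p qX) :=
  summable_finsum Finset.univ (fun x t => margX p x * qX x t)
    (fun x _ => (summable_row hqX x).mul_left _)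

lemma summable_margTY {qY : Y → ℕ → ℝ} (hqY : IsChannelNat qY) :
    Summable (margTY p qY) :=
  summable_finsum Finset.univ (fun y t => margY p y * qY y t)
    (fun y _ => (summable_row hqY y).mul_left _)


/-- Scale a channel by `c`: with probability `1-c` output `0`, otherwise shift by one. -/
def scaleC (c : ℝ) {A : Type} (q : A → ℕ → ℝ) : A → ℕ → ℝ :=
  fun a t => if t = 0 then 1 - c else c * q a (t - 1)

lemma scaleC_zero (c : ℝ) {A : Type} (q : A → ℕ → ℝ) (a : A) :
    scaleC c q a 0 = 1 - c := rfl

lemma scaleC_succ (c : ℝ) {A : Type} (q : A → ℕ → ℝ) (a : A) (t : ℕ) :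
    scaleC c q a (t + 1) = c * q a t := by
  simp [scaleC]

lemma scaleC_channel {c : ℝ} (hc0 : 0 ≤ c) (hc1 : c ≤ 1) {A : Type}
    {q : A → ℕ → ℝ} (hq : IsChannelNat q) : IsChannelNat (scaleC c q) := by
  constructor
  · intro a t
    cases t with
    | zero => rw [scaleC_zero]; linarith
    | succ t => rw [scaleC_succ]; exact mul_nonneg hc0 (hq.1 a t)
  · intro a
    have hs : Summable (fun t => scaleC c q a (t + 1)) := by
      simpa only [scaleC_succ] using (summable_row hq a).mul_left c
    have hsum : Summable (scaleC c q a) := (summable_nat_add_iff 1).1 hs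
    rw [Summable.tsum_eq_zero_add hsum]
    simp only [scaleC_succ, scaleC_zero]
    rw [tsum_mul_left, hq.2 a]
    ring

variable {X Y : Type} [Fintype X] [Fintype Y] {p : X → Y → ℝ}

lemma margTY_scaleC_zero (hp : IsJointDist p) (c : ℝ) (qY : Y → ℕ → ℝ) :
    margTY p (scaleC c qY) 0 = 1 - c := by
  simp only [margTY, scaleC_zero]
  rw [← Finset.sum_mul, sum_margY hp, one_mul]

lemma margTY_scaleC_succ (c : ℝ) (qY : Y → ℕ → ℝ) (t : ℕ) :
    margTY p (scaleC c qY) (t + 1) = c * margTY p qY t := by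
  simp only [margTY, scaleC_succ]
  rw [Finset.mul_sum]
  exact Finset.sum_congr rfl fun y _ => by ring

lemma miYTY_scaleC (hp : IsJointDist p) (c : ℝ) (qY : Y → ℕ → ℝ) :
    miYTY p (scaleC c qY) = c * miYTY p qY := by
  simp only [miYTY]
  rw [Finset.mul_sum]
  refine Finset.sum_congr rfl fun y _ => ?_
  set φ : ℕ → ℝ := fun t =>
    margY p y * scaleC c qY y t * Real.log (scaleC c qY y t / margTY p (scaleC c qY) t)
    with hφ
  have h0 : φ 0 = 0 := by
    rw [hφ]
    simp only [scaleC_zero, margTY_scaleC_zero hp]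
    rcases eq_or_ne (1 - c) 0 with h | h
    · rw [h]; ring
    · rw [div_self h, Real.log_one, mul_zero]
  have hsucc : ∀ t, φ (t + 1) =
      c * (margY p y * qY y t * Real.log (qY y t / margTY p qY t)) := by
    intro t
    rw [hφ]
    simp only [scaleC_succ, margTY_scaleC_succ]
    rcases eq_or_ne c 0 with h | h
    · rw [h]; ring
    · rw [mul_div_mul_left _ _ h]; ring
  have hinj : Function.Injective (fun t : ℕ => t + 1) := fun a b h => by
    simp only at h; omega
  have hsupp : Function.support φ ⊆ Set.range (fun t : ℕ => t + 1) := by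
    intro t ht
    cases t with
    | zero => exact absurd h0 ht
    | succ t => exact ⟨t, rfl⟩
  calc ∑' t, φ t = ∑' t, φ (t + 1) := (Function.Injective.tsum_eq hinj hsupp).symm
    _ = ∑' t, c * (margY p y * qY y t * Real.log (qY y t / margTY p qY t)) := by
        exact tsum_congr hsucc
    _ = c * ∑' t, margY p y * qY y t * Real.log (qY y t / margTY p qY t) :=
        tsum_mul_left

lemma margTT_scaleC_zero (hp : IsJointDist p) (c : ℝ) (qX : X → ℕ → ℝ)
    (qY : Y → ℕ → ℝ) (s : ℕ) :
    margTT p qX (scaleC c qY) (s, 0) = (1 - c) * margTX p qX s := by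
  simp only [margTT, margTX, scaleC_zero]
  rw [Finset.mul_sum]
  refine Finset.sum_congr rfl fun x _ => ?_
  rw [← Finset.sum_mul, ← Finset.sum_mul, margX]
  ring

lemma margTT_scaleC_succ (c : ℝ) (qX : X → ℕ → ℝ) (qY : Y → ℕ → ℝ)
    (s t : ℕ) :
    margTT p qX (scaleC c qY) (s, t + 1) = c * margTT p qX qY (s, t) := by
  simp only [margTT, scaleC_succ]
  rw [Finset.mul_sum]
  refine Finset.sum_congr rfl fun x _ => ?_
  rw [Finset.mul_sum]
  exact Finset.sum_congr rfl fun y _ => by ring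

lemma miTT_scaleC (hp : IsJointDist p) (c : ℝ) (qX : X → ℕ → ℝ)
    (qY : Y → ℕ → ℝ) :
    miTT p qX (scaleC c qY) = c * miTT p qX qY := by
  simp only [miTT]
  set F : ℕ × ℕ → ℝ := fun u => margTT p qX (scaleC c qY) u *
    Real.log (margTT p qX (scaleC c qY) u /
      (margTX p qX u.1 * margTY p (scaleC c qY) u.2)) with hFdef
  have h0 : ∀ s, F (s, 0) = 0 := by
    intro s
    rw [hFdef]
    simp only [margTT_scaleC_zero hp, margTY_scaleC_zero hp]
    rw [mul_comm (margTX p qX s) (1 - c)]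
    rcases eq_or_ne ((1 - c) * margTX p qX s) 0 with h | h
    · rw [h]; simp
    · rw [div_self h, Real.log_one, mul_zero]
  have hsucc : ∀ u : ℕ × ℕ, F (u.1, u.2 + 1) = c * (margTT p qX qY u *
      Real.log (margTT p qX qY u / (margTX p qX u.1 * margTY p qY u.2))) := by
    rintro ⟨s, t⟩
    rw [hFdef]
    simp only [margTT_scaleC_succ, margTY_scaleC_succ]
    rcases eq_or_ne c 0 with h | h
    · rw [h]; ring
    · rw [mul_left_comm (margTX p qX s) c (margTY p qY t), mul_div_mul_left _ _ h]
      ring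
  have hinj : Function.Injective (fun u : ℕ × ℕ => (u.1, u.2 + 1)) := by
    rintro ⟨a, b⟩ ⟨a', b'⟩ h
    simp only [Prod.mk.injEq] at h
    exact Prod.ext h.1 (by omega)
  have hsupp : Function.support F ⊆ Set.range (fun u : ℕ × ℕ => (u.1, u.2 + 1)) := by
    rintro ⟨s, t⟩ ht
    cases t with
    | zero => exact absurd (h0 s) ht
    | succ t => exact ⟨(s, t), rfl⟩
  calc ∑' u : ℕ × ℕ, F u = ∑' u : ℕ × ℕ, F (u.1, u.2 + 1) :=
      (Function.Injective.tsum_eq hinj hsupp).symm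
    _ = ∑' u : ℕ × ℕ, c * (margTT p qX qY u *
        Real.log (margTT p qX qY u / (margTX p qX u.1 * margTY p qY u.2))) :=
      tsum_congr hsucc
    _ = c * ∑' u : ℕ × ℕ, margTT p qX qY u *
        Real.log (margTT p qX qY u / (margTX p qX u.1 * margTY p qY u.2)) :=
      tsum_mul_left

lemma pos_of_mul3 {a b c : ℝ} (ha : 0 ≤ a) (hb : 0 ≤ b) (hc : 0 ≤ c)
    (h : 0 < a * b * c) : 0 < a ∧ 0 < b ∧ 0 < c := by
  rcases eq_or_lt_of_le ha with h1 | h1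
  · rw [← h1] at h; simp at h
  rcases eq_or_lt_of_le hb with h2 | h2
  · rw [← h2] at h; simp at h
  rcases eq_or_lt_of_le hc with h3 | h3
  · rw [← h3] at h; simp at h
  exact ⟨h1, h2, h3⟩

set_option maxHeartbeats 2000000 in
/-- Data-processing-type inequality: `I(T_X;T_Y) ≤ I(Y;T_Y)`. -/
lemma miTT_le_miYTY (hp : IsJointDist p) {qX : X → ℕ → ℝ} {qY : Y → ℕ → ℝ}
    (hqX : IsChannelNat qX) (hqY : IsChannelNat qY) :
    miTT p qX qY ≤ miYTY p qY := by
  classical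
  -- abbreviations
  set F : ℕ × ℕ → ℝ := fun u => margTT p qX qY u *
    Real.log (margTT p qX qY u / (margTX p qX u.1 * margTY p qY u.2)) with hFdef
  set ψ : Y → ℕ × ℕ → ℝ := fun y u => (∑ x, p x y * qX x u.1) *
    (qY y u.2 * Real.log (qY y u.2 / margTY p qY u.2)) with hψdef
  set G : ℕ × ℕ → ℝ := fun u => ∑ y, ψ y u with hGdef
  have hA0 : ∀ s, 0 ≤ margTX p qX s := margTX_nonneg hp hqX
  have hB0 : ∀ t, 0 ≤ margTY p qY t := margTY_nonneg hp hqY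
  have hM0 : ∀ u, 0 ≤ margTT p qX qY u := margTT_nonneg hp hqX hqY
  have hAsum : Summable (margTX p qX) := summable_margTX hqX
  have hBsum : Summable (margTY p qY) := summable_margTY hqY
  -- a positive entry of p
  obtain ⟨x0, y0, hxy0⟩ : ∃ x y, 0 < p x y := by
    by_contra hcon
    push_neg at hcon
    have h1 : (∑ x, ∑ y, p x y) = 0 :=
      Finset.sum_eq_zero fun x _ => Finset.sum_eq_zero fun y _ =>
        le_antisymm (hcon x y) (hp.1 x y)
    rw [hp.2] at h1; norm_num at h1
  -- minimum positive entry
  set S : Finset (X × Y) := Finset.univ.filter (fun a => 0 < p a.1 a.2) with hSdef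
  have hSne : S.Nonempty := ⟨(x0, y0), by simp [hSdef, hxy0]⟩
  set pm := S.inf' hSne (fun a => p a.1 a.2) with hpmdef
  have hpm0 : 0 < pm := by
    rw [hpmdef, Finset.lt_inf'_iff]
    intro a ha
    exact (Finset.mem_filter.1 ha).2
  have hpmle : ∀ x y, 0 < p x y → pm ≤ p x y := fun x y h =>
    Finset.inf'_le (f := fun a : X × Y => p a.1 a.2) (b := (x, y)) (by simp [hSdef, h])
  have hK1 : 1 ≤ 1 / pm := by
    refine one_le_one_div hpm0 ?_
    calc pm ≤ p x0 y0 := hpmle x0 y0 hxy0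
      _ ≤ margX p x0 := p_le_margX hp x0 y0
      _ ≤ 1 := margX_le_one hp x0
  have hKbound : ∀ x y, p x y ≤ (1 / pm) * (margX p x * margY p y) := by
    intro x y
    rcases eq_or_lt_of_le (hp.1 x y) with h | h
    · rw [← h]
      have := margX_nonneg hp x
      have := margY_nonneg hp y
      positivity
    · have h1 := hpmle x y h
      have h2 := p_le_margX hp x y
      have h3 := p_le_margY hp x y
      rw [div_mul_eq_mul_div, one_mul, le_div_iff₀ hpm0]
      nlinarith
  -- the bound  M ≤ (1/pm) * A * B
  have hMle : ∀ u : ℕ × ℕ, margTT p qX qY u ≤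
      (1 / pm) * (margTX p qX u.1 * margTY p qY u.2) := by
    intro u
    have e1 : (1 / pm) * (margTX p qX u.1 * margTY p qY u.2) =
        ∑ x, ∑ y, (1 / pm) * ((margX p x * qX x u.1) * (margY p y * qY y u.2)) := by
      rw [margTX, margTY, Finset.sum_mul_sum]
      simp only [Finset.mul_sum]
    rw [e1]
    simp only [margTT]
    refine Finset.sum_le_sum fun x _ => Finset.sum_le_sum fun y _ => ?_
    calc p x y * qX x u.1 * qY y u.2 = (qX x u.1 * qY y u.2) * p x y := by ring
      _ ≤ (qX x u.1 * qY y u.2) * ((1 / pm) * (margX p x * margY p y)) :=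
        mul_le_mul_of_nonneg_left (hKbound x y)
          (mul_nonneg (hqX.1 x u.1) (hqY.1 y u.2))
      _ = (1 / pm) * ((margX p x * qX x u.1) * (margY p y * qY y u.2)) := by ring
  -- summability of F
  have hMsum : Summable (margTT p qX qY) := by
    have hin : ∀ x ∈ (Finset.univ : Finset X),
        Summable (fun u : ℕ × ℕ => ∑ y, p x y * qX x u.1 * qY y u.2) := by
      intro x _
      have hin2 : ∀ y ∈ (Finset.univ : Finset Y),
          Summable (fun u : ℕ × ℕ => p x y * qX x u.1 * qY y u.2) := by
        intro y _
        exact Summable.mul_of_nonneg ((summable_row hqX x).mul_left _)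
          (summable_row hqY y)
          (fun s => mul_nonneg (hp.1 x y) (hqX.1 x s)) (fun t => hqY.1 y t)
      exact summable_finsum Finset.univ _ hin2
    have hbig := summable_finsum Finset.univ _ hin
    exact hbig.congr fun u => by rw [margTT]
  have hABsum : Summable (fun u : ℕ × ℕ => margTX p qX u.1 * margTY p qY u.2) :=
    Summable.mul_of_nonneg hAsum hBsum (fun s => hA0 s) (fun t => hB0 t)
  have hFsum : Summable F := by
    refine summable_abs_iff.1 (Summable.of_nonneg_of_le (fun u => abs_nonneg _)
      (fun u => ?_) ((hMsum.mul_right (Real.log (1 / pm))).add hABsum))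
    have hab0 : 0 ≤ margTX p qX u.1 * margTY p qY u.2 := mul_nonneg (hA0 _) (hB0 _)
    have h1 : F u ≤ margTT p qX qY u * Real.log (1 / pm) :=
      mul_log_div_le (hM0 u) hab0 (hMle u)
    have h2 : margTT p qX qY u - margTX p qX u.1 * margTY p qY u.2 ≤ F u := by
      refine sub_le_mul_log_div (hM0 u) hab0 (fun hz => ?_)
      have := hMle u
      rw [hz, mul_zero] at this
      exact le_antisymm this (hM0 u)
    have h3 : 0 ≤ margTT p qX qY u * Real.log (1 / pm) :=
      mul_nonneg (hM0 u) (Real.log_nonneg hK1)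
    rw [abs_le]
    constructor <;> nlinarith [hM0 u, hab0]
  -- summability and tsum computation for each ψ y
  have hψfact : ∀ y : Y, Summable (ψ y) ∧
      (∑' t, margY p y * qY y t * Real.log (qY y t / margTY p qY t)) = ∑' u, ψ y u := by
    intro y
    rcases eq_or_lt_of_le (margY_nonneg hp y) with h | h
    · -- degenerate: margY y = 0
      have hpz : ∀ x, p x y = 0 := by
        intro x
        have h1 : ∑ x, p x y = 0 := h.symm
        exact (Finset.sum_eq_zero_iff_of_nonneg (fun x' _ => hp.1 x' y)).1 h1 x
          (Finset.mem_univ x)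
      have hψz : ψ y = fun _ => 0 := by
        funext u
        rw [hψdef]
        simp [hpz]
      constructor
      · rw [hψz]; exact summable_zero
      · rw [hψz]
        simp [← h]
    · -- main case: margY y > 0
      have hBy : ∀ t, margY p y * qY y t ≤ margTY p qY t := fun t =>
        Finset.single_le_sum
          (fun y' _ => mul_nonneg (margY_nonneg hp y') (hqY.1 y' t))
          (Finset.mem_univ y)
      have hqYB : ∀ t, qY y t ≤ (1 / margY p y) * margTY p qY t := by
        intro t
        rw [div_mul_eq_mul_div, one_mul, le_div_iff₀ h]
        calc qY y t * margY p y = margY p y * qY y t := by ring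
          _ ≤ margTY p qY t := hBy t
      have hlog1 : 0 ≤ Real.log (1 / margY p y) :=
        Real.log_nonneg (one_le_one_div h (margY_le_one hp y))
      set ρ : ℕ → ℝ := fun t => qY y t * Real.log (qY y t / margTY p qY t) with hρdef
      have hρabs : ∀ t, |ρ t| ≤ qY y t * Real.log (1 / margY p y) + margTY p qY t := by
        intro t
        have h1 : ρ t ≤ qY y t * Real.log (1 / margY p y) :=
          mul_log_div_le (hqY.1 y t) (hB0 t) (hqYB t)
        have h2 : qY y t - margTY p qY t ≤ ρ t := by
          refine sub_le_mul_log_div (hqY.1 y t) (hB0 t) (fun hz => ?_)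
          have h3 := hBy t
          rw [hz] at h3
          have h4 := mul_nonneg (le_of_lt h) (hqY.1 y t)
          nlinarith
        have h3 : 0 ≤ qY y t * Real.log (1 / margY p y) :=
          mul_nonneg (hqY.1 y t) hlog1
        rw [abs_le]
        constructor <;> nlinarith [hqY.1 y t, hB0 t]
      have hρsum : Summable ρ :=
        summable_abs_iff.1 (Summable.of_nonneg_of_le (fun t => abs_nonneg _) hρabs
          (((summable_row hqY y).mul_right _).add hBsum))
      have hχsum : Summable (fun s => ∑ x, p x y * qX x s) :=
        summable_finsum Finset.univ (fun x s => p x y * qX x s)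
          (fun x _ => (summable_row hqX x).mul_left _)
      have hχnn : ∀ s, 0 ≤ ∑ x, p x y * qX x s := fun s =>
        Finset.sum_nonneg fun x _ => mul_nonneg (hp.1 x y) (hqX.1 x s)
      have hχnorm : Summable (fun s => ‖∑ x, p x y * qX x s‖) := by
        refine hχsum.congr fun s => ?_
        rw [Real.norm_eq_abs, abs_of_nonneg (hχnn s)]
      have hρnorm : Summable (fun t => ‖ρ t‖) := by
        refine hρsum.abs.congr fun t => ?_
        rw [Real.norm_eq_abs]
      have hψs : Summable (ψ y) := by
        have h1 := Summable.mul_norm hχnorm hρnorm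
        have h2 := Summable.of_norm h1
        exact h2
      refine ⟨hψs, ?_⟩
      have e1 : (∑' t, margY p y * qY y t * Real.log (qY y t / margTY p qY t)) =
          margY p y * ∑' t, ρ t := by
        rw [← tsum_mul_left]
        exact tsum_congr fun t => by rw [hρdef]; ring
      have e2 : (∑' u : ℕ × ℕ, ψ y u) =
          (∑' s, ∑ x, p x y * qX x s) * ∑' t, ρ t :=
        (tsum_mul_tsum_of_summable_norm hχnorm hρnorm).symm
      have e3 : (∑' s, ∑ x, p x y * qX x s) = margY p y := by
        rw [Summable.tsum_finsetSum (fun x _ => (summable_row hqX x).mul_left _)]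
        have : ∀ x, (∑' s, p x y * qX x s) = p x y := by
          intro x
          rw [tsum_mul_left, hqX.2 x, mul_one]
        rw [Finset.sum_congr rfl fun x _ => this x, margY]
      rw [e1, e2, e3]
  have hψsummable : ∀ y, Summable (ψ y) := fun y => (hψfact y).1
  have hGsum : Summable G :=
    summable_finsum Finset.univ ψ (fun y _ => hψsummable y)
  have hmiY : miYTY p qY = ∑' u, G u := by
    simp only [miYTY]
    calc (∑ y, ∑' t, margY p y * qY y t * Real.log (qY y t / margTY p qY t))
        = ∑ y, ∑' u : ℕ × ℕ, ψ y u :=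
          Finset.sum_congr rfl fun y _ => (hψfact y).2
      _ = ∑' u : ℕ × ℕ, ∑ y, ψ y u := (Summable.tsum_finsetSum fun y _ => hψsummable y).symm
  -- pointwise inequality F ≤ G
  have hFG : ∀ u, F u ≤ G u := by
    rintro ⟨s, t⟩
    by_cases hM : margTT p qX qY (s, t) = 0
    · -- all joint terms vanish
      have hterm : ∀ x y, p x y * qX x s * qY y t = 0 := by
        intro x y
        have h1 : ∀ x' ∈ Finset.univ, (0:ℝ) ≤ ∑ y', p x' y' * qX x' s * qY y' t :=
          fun x' _ => Finset.sum_nonneg fun y' _ =>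
            mul_nonneg (mul_nonneg (hp.1 x' y') (hqX.1 x' s)) (hqY.1 y' t)
        have h2 := (Finset.sum_eq_zero_iff_of_nonneg h1).1 hM x (Finset.mem_univ x)
        have h3 : ∀ y' ∈ Finset.univ, (0:ℝ) ≤ p x y' * qX x s * qY y' t :=
          fun y' _ => mul_nonneg (mul_nonneg (hp.1 x y') (hqX.1 x s)) (hqY.1 y' t)
        exact (Finset.sum_eq_zero_iff_of_nonneg h3).1 h2 y (Finset.mem_univ y)
      have hGz : G (s, t) = 0 := by
        rw [hGdef]
        refine Finset.sum_eq_zero fun y _ => ?_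
        rw [hψdef]
        have h1 : (∑ x, p x y * qX x s) * qY y t = 0 := by
          rw [Finset.sum_mul]
          exact Finset.sum_eq_zero fun x _ => hterm x y
        calc (∑ x, p x y * qX x s) * (qY y t * Real.log (qY y t / margTY p qY t))
            = ((∑ x, p x y * qX x s) * qY y t) * Real.log (qY y t / margTY p qY t) := by
              ring
          _ = 0 := by rw [h1, zero_mul]
      have hFz : F (s, t) = 0 := by
        rw [hFdef]
        simp [hM]
      rw [hFz, hGz]
    · have hMpos : 0 < margTT p qX qY (s, t) := (hM0 (s, t)).lt_of_ne (Ne.symm hM)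
      -- positive witness
      have hwitness : ∃ x y, 0 < p x y * qX x s * qY y t := by
        by_contra hcon
        push_neg at hcon
        apply hM
        refine Finset.sum_eq_zero fun x _ => Finset.sum_eq_zero fun y _ => ?_
        exact le_antisymm (hcon x y)
          (mul_nonneg (mul_nonneg (hp.1 x y) (hqX.1 x s)) (hqY.1 y t))
      obtain ⟨x1, y1, hx1⟩ := hwitness
      obtain ⟨hp1, hq1, hq2⟩ := pos_of_mul3 (hp.1 x1 y1) (hqX.1 x1 s) (hqY.1 y1 t) hx1
      have hApos : 0 < margTX p qX s := by
        have h1 : margX p x1 * qX x1 s ≤ margTX p qX s :=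
          Finset.single_le_sum
            (fun x' _ => mul_nonneg (margX_nonneg hp x') (hqX.1 x' s))
            (Finset.mem_univ x1)
        have h2 : 0 < margX p x1 * qX x1 s :=
          mul_pos (lt_of_lt_of_le hp1 (p_le_margX hp x1 y1)) hq1
        linarith
      have hBpos : 0 < margTY p qY t := by
        have h1 : margY p y1 * qY y1 t ≤ margTY p qY t :=
          Finset.single_le_sum
            (fun y' _ => mul_nonneg (margY_nonneg hp y') (hqY.1 y' t))
            (Finset.mem_univ y1)
        have h2 : 0 < margY p y1 * qY y1 t :=
          mul_pos (lt_of_lt_of_le hp1 (p_le_margY hp x1 y1)) hq2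
        linarith
      -- notation for this point
      set M0 := margTT p qX qY (s, t) with hM0def
      set A0 := margTX p qX s with hA0def
      set B0 := margTY p qY t with hB0def
      set r : X → Y → ℝ := fun x y => p x y * qX x s * qY y t with hrdef
      set w : X → Y → ℝ := fun x y => p x y * qX x s * (M0 / A0) with hwdef
      have hsumr : ∑ x, ∑ y, r x y = M0 := by rw [hM0def]; simp only [margTT]; rfl
      have hsumw : ∑ x, ∑ y, w x y = M0 := by
        have e1 : ∀ x, ∑ y, w x y = (margX p x * qX x s) * (M0 / A0) := by
          intro x
          rw [hwdef]
          simp only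
          rw [← Finset.sum_mul, ← Finset.sum_mul, margX]
        rw [Finset.sum_congr rfl fun x _ => e1 x, ← Finset.sum_mul]
        rw [hA0def] at *
        rw [show (∑ x, margX p x * qX x s) = margTX p qX s from by rw [margTX]]
        rw [mul_comm, div_mul_cancel₀ _ (ne_of_gt hApos)]
      -- pointwise bound
      have hpt : ∀ x y, r x y * Real.log (M0 / (A0 * B0)) ≤
          r x y * Real.log (qY y t / B0) + (w x y - r x y) := by
        intro x y
        have hr0 : 0 ≤ r x y := by
          rw [hrdef]
          exact mul_nonneg (mul_nonneg (hp.1 x y) (hqX.1 x s)) (hqY.1 y t)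
        rcases eq_or_lt_of_le hr0 with h | hr
        · rw [← h]
          have hw0 : 0 ≤ w x y := by
            rw [hwdef]
            exact mul_nonneg (mul_nonneg (hp.1 x y) (hqX.1 x s))
              (div_nonneg (le_of_lt hMpos) (le_of_lt hApos))
          simp
          linarith
        · obtain ⟨hpp, hqq, hyy⟩ := pos_of_mul3 (hp.1 x y) (hqX.1 x s) (hqY.1 y t) hr
          have hwpos : 0 < w x y := by
            rw [hwdef]
            exact mul_pos (mul_pos hpp hqq) (div_pos hMpos hApos)
          have hkey : Real.log (qY y t / B0) - Real.log (M0 / (A0 * B0)) =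
              Real.log (r x y / w x y) := by
            have hrw : r x y / w x y = qY y t * A0 / M0 := by
              rw [hrdef, hwdef]
              field_simp
            rw [hrw, Real.log_div (ne_of_gt hyy) (ne_of_gt hBpos),
              Real.log_div (ne_of_gt hMpos) (ne_of_gt (mul_pos hApos hBpos)),
              Real.log_mul (ne_of_gt hApos) (ne_of_gt hBpos),
              Real.log_div (ne_of_gt (mul_pos hyy hApos)) (ne_of_gt hMpos),
              Real.log_mul (ne_of_gt hyy) (ne_of_gt hApos)]
            ring
          have hgibbs : r x y - w x y ≤ r x y * Real.log (r x y / w x y) :=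
            sub_le_mul_log_div (le_of_lt hr) (le_of_lt hwpos)
              (fun hz => absurd hz (ne_of_gt hwpos))
          have hdistrib : r x y * Real.log (r x y / w x y) =
              r x y * Real.log (qY y t / B0) - r x y * Real.log (M0 / (A0 * B0)) := by
            rw [← hkey]; ring
          linarith [hgibbs, hdistrib.symm.le, hdistrib.le]
      -- summing up
      have hFval : F (s, t) = ∑ x, ∑ y, r x y * Real.log (M0 / (A0 * B0)) := by
        rw [hFdef]
        simp only
        rw [← hM0def, ← hA0def, ← hB0def, ← hsumr, Finset.sum_mul]
        exact Finset.sum_congr rfl fun x _ => Finset.sum_mul _ _ _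
      have hGval : G (s, t) = ∑ x, ∑ y, r x y * Real.log (qY y t / B0) := by
        rw [hGdef, Finset.sum_comm]
        refine Finset.sum_congr rfl fun y _ => ?_
        rw [hψdef]
        simp only
        rw [← hB0def, Finset.sum_mul]
        refine Finset.sum_congr rfl fun x _ => ?_
        rw [hrdef]
        ring
      have hsum1 : ∑ x, ∑ y, (r x y * Real.log (qY y t / B0) + (w x y - r x y)) =
          (∑ x, ∑ y, r x y * Real.log (qY y t / B0)) +
          ((∑ x, ∑ y, w x y) - (∑ x, ∑ y, r x y)) := by
        rw [← Finset.sum_sub_distrib, ← Finset.sum_add_distrib]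
        refine Finset.sum_congr rfl fun x _ => ?_
        rw [← Finset.sum_sub_distrib, ← Finset.sum_add_distrib]
      rw [hFval, hGval]
      calc (∑ x, ∑ y, r x y * Real.log (M0 / (A0 * B0)))
          ≤ ∑ x, ∑ y, (r x y * Real.log (qY y t / B0) + (w x y - r x y)) :=
            Finset.sum_le_sum fun x _ => Finset.sum_le_sum fun y _ => hpt x y
        _ = (∑ x, ∑ y, r x y * Real.log (qY y t / B0)) +
            ((∑ x, ∑ y, w x y) - (∑ x, ∑ y, r x y)) := hsum1
        _ = ∑ x, ∑ y, r x y * Real.log (qY y t / B0) := by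
            rw [hsumr, hsumw]; ring
  calc miTT p qX qY = ∑' u, F u := by rw [miTT]
    _ ≤ ∑' u, G u := Summable.tsum_le_tsum hFG hFsum hGsum
    _ = miYTY p qY := hmiY.symm

end SIBaux

/-- For every `0 ≤ λ ≤ I(X;Y)`, every minimiser of the Symmetric
Information Bottleneck problem — minimise `I_q(X;T_X) + I_q(Y;T_Y)` over pairs of
channels `q(T_X|X), q(T_Y|Y)` subject to `I_q(T_X;T_Y) ≥ λ`, with joint distribution
`q(x,y,t_X,t_Y) = p(x,y) q(t_X|x) q(t_Y|y)` — satisfies `I_q(T_X;T_Y) = λ`; hence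
the inequality constraint can be replaced by the equality constraint without
changing the set of minimisers. -/
theorem sib_minimisers_saturate {X Y : Type} [Fintype X] [Fintype Y]
    (p : X → Y → ℝ) (hp : IsJointDist p)
    (lam : ℝ) (hlam0 : 0 ≤ lam) (hlam1 : lam ≤ miXY p) :
    (∀ (qX : X → ℕ → ℝ) (qY : Y → ℕ → ℝ), IsChannelNat qX → IsChannelNat qY →
      lam ≤ miTT p qX qY →
      (∀ (qX' : X → ℕ → ℝ) (qY' : Y → ℕ → ℝ), IsChannelNat qX' → IsChannelNat qY' →
        lam ≤ miTT p qX' qY' → miXTX p qX + miYTY p qY ≤ miXTX p qX' + miYTY p qY') →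
      miTT p qX qY = lam) ∧
    ({qp : (X → ℕ → ℝ) × (Y → ℕ → ℝ) |
        IsChannelNat qp.1 ∧ IsChannelNat qp.2 ∧ lam ≤ miTT p qp.1 qp.2 ∧
        ∀ qp' : (X → ℕ → ℝ) × (Y → ℕ → ℝ), IsChannelNat qp'.1 → IsChannelNat qp'.2 →
          lam ≤ miTT p qp'.1 qp'.2 →
          miXTX p qp.1 + miYTY p qp.2 ≤ miXTX p qp'.1 + miYTY p qp'.2} =
      {qp : (X → ℕ → ℝ) × (Y → ℕ → ℝ) |
        IsChannelNat qp.1 ∧ IsChannelNat qp.2 ∧ miTT p qp.1 qp.2 = lam ∧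
        ∀ qp' : (X → ℕ → ℝ) × (Y → ℕ → ℝ), IsChannelNat qp'.1 → IsChannelNat qp'.2 →
          miTT p qp'.1 qp'.2 = lam →
          miXTX p qp.1 + miYTY p qp.2 ≤ miXTX p qp'.1 + miYTY p qp'.2}) := by
  classical
  have key : ∀ (qX : X → ℕ → ℝ) (qY : Y → ℕ → ℝ), IsChannelNat qX → IsChannelNat qY →
      lam ≤ miTT p qX qY →
      (∀ (qX' : X → ℕ → ℝ) (qY' : Y → ℕ → ℝ), IsChannelNat qX' → IsChannelNat qY' →
        lam ≤ miTT p qX' qY' → miXTX p qX + miYTY p qY ≤ miXTX p qX' + miYTY p qY') →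
      miTT p qX qY = lam := by
    intro qX qY hqX hqY hfeas hmin
    by_contra hne
    have hlt : lam < miTT p qX qY := lt_of_le_of_ne hfeas (Ne.symm hne)
    have hm0 : 0 < miTT p qX qY := lt_of_le_of_lt hlam0 hlt
    set c := lam / miTT p qX qY with hc
    have hc0 : 0 ≤ c := div_nonneg hlam0 (le_of_lt hm0)
    have hc1 : c < 1 := (div_lt_one hm0).2 hlt
    have hch : IsChannelNat (SIBaux.scaleC c qY) :=
      SIBaux.scaleC_channel hc0 (le_of_lt hc1) hqY
    have hTT : miTT p qX (SIBaux.scaleC c qY) = lam := by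
      rw [SIBaux.miTT_scaleC hp, hc, div_mul_cancel₀ _ (ne_of_gt hm0)]
    have hcmp := hmin qX (SIBaux.scaleC c qY) hqX hch (le_of_eq hTT.symm)
    rw [SIBaux.miYTY_scaleC hp] at hcmp
    have hIY : miTT p qX qY ≤ miYTY p qY := SIBaux.miTT_le_miYTY hp hqX hqY
    nlinarith [hcmp, hIY, hm0, hc1,
      mul_pos (sub_pos.2 hc1) (lt_of_lt_of_le hm0 hIY)]
  refine ⟨key, ?_⟩
  ext qp
  simp only [Set.mem_setOf_eq]
  constructor
  · rintro ⟨h1, h2, h3, h4⟩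
    have heq : miTT p qp.1 qp.2 = lam :=
      key qp.1 qp.2 h1 h2 h3 (fun qX' qY' a b c' => h4 (qX', qY') a b c')
    exact ⟨h1, h2, heq, fun qp' ha hb hc' => h4 qp' ha hb (le_of_eq hc'.symm)⟩
  · rintro ⟨h1, h2, h3, h4⟩
    refine ⟨h1, h2, le_of_eq h3.symm, ?_⟩
    intro qp' ha hb hc'
    rcases eq_or_lt_of_le hc' with heq | hlt
    · exact h4 qp' ha hb heq.symm
    · have hm0 : 0 < miTT p qp'.1 qp'.2 := lt_of_le_of_lt hlam0 hlt
      set c := lam / miTT p qp'.1 qp'.2 with hc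
      have hc0 : 0 ≤ c := div_nonneg hlam0 (le_of_lt hm0)
      have hc1 : c < 1 := (div_lt_one hm0).2 hlt
      have hch : IsChannelNat (SIBaux.scaleC c qp'.2) :=
        SIBaux.scaleC_channel hc0 (le_of_lt hc1) hb
      have hTT : miTT p qp'.1 (SIBaux.scaleC c qp'.2) = lam := by
        rw [SIBaux.miTT_scaleC hp, hc, div_mul_cancel₀ _ (ne_of_gt hm0)]
      have h5 := h4 (qp'.1, SIBaux.scaleC c qp'.2) ha hch hTT
      dsimp only at h5
      rw [SIBaux.miYTY_scaleC hp] at h5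
      have hIY : miTT p qp'.1 qp'.2 ≤ miYTY p qp'.2 := SIBaux.miTT_le_miYTY hp ha hb
      have hle : c * miYTY p qp'.2 ≤ miYTY p qp'.2 := by
        nlinarith [lt_of_lt_of_le hm0 hIY, hc1, hc0]
      linarith
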